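/- Let f : ℝ → ℝ be continuous, nonnegative wlog integrable with ∫_ℝ f = 1, let S_1,…,S_n ∈ ℝ, and define l_n(x) = n^{−1/2} ∑_{k=1}^n f(S_k − √n x). Then for any rationals a < b and ε > 0, ∫_a^b l_n(x) dx ≤ (1/n)·#{k ≤ n : n^{−1/2} S_k ∈ [a−ε, b+ε]} + ∫_{√n ε}^∞ f(x) dx, and ∫_a^b l_n(x) dx ≥ (1/n)·#{k ≤ n : n^{−1/2} S_k ∈ [a+ε, b−ε]} · ∫_{−ε√n}^{ε√n} f(x) dx. -/

import Mathlib

open MeasureTheory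
open scoped Classical

theorem occupation_sandwich (f : ℝ → ℝ) (hf : Continuous f) (hnn : ∀ x, 0 ≤ f x)
    (hsymm : ∀ x, f (-x) = f x) (hint : Integrable f) (h1 : (∫ x, f x) = 1)
    (n : ℕ) (hn : 1 ≤ n) (S : ℕ → ℝ) (a b : ℚ) (hab : a < b) (ε : ℚ) (hε : 0 < ε) :
    (∫ x in (a:ℝ)..(b:ℝ),
        (Real.sqrt n)⁻¹ * ∑ k ∈ Finset.Icc 1 n, f (S k - Real.sqrt n * x))
      ≤ (((Finset.Icc 1 n).filter
            (fun k => (Real.sqrt n)⁻¹ * S k ∈ Set.Icc ((a:ℝ) - ε) ((b:ℝ) + ε))).card : ℝ) / n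
        + ∫ x in Set.Ioi (Real.sqrt n * ε), f x
    ∧
    (∫ x in (a:ℝ)..(b:ℝ),
        (Real.sqrt n)⁻¹ * ∑ k ∈ Finset.Icc 1 n, f (S k - Real.sqrt n * x))
      ≥ (((Finset.Icc 1 n).filter
            (fun k => (Real.sqrt n)⁻¹ * S k ∈ Set.Icc ((a:ℝ) + ε) ((b:ℝ) - ε))).card : ℝ) / n
        * ∫ x in (-(ε:ℝ) * Real.sqrt n)..((ε:ℝ) * Real.sqrt n), f x := by
  have hn0 : (0:ℝ) < n := by exact_mod_cast hn
  set c : ℝ := Real.sqrt n with hc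
  have hc0 : 0 < c := Real.sqrt_pos.mpr hn0
  have hcc : c * c = (n:ℝ) := Real.mul_self_sqrt hn0.le
  have hcinv : c * c⁻¹ = 1 := mul_inv_cancel₀ hc0.ne'
  have hab' : (a:ℝ) < (b:ℝ) := by exact_mod_cast hab
  have hε' : (0:ℝ) < (ε:ℝ) := by exact_mod_cast hε
  set J : ℕ → ℝ := fun k => ∫ x in (S k - c*(b:ℝ))..(S k - c*(a:ℝ)), f x with hJ
  have hle : ∀ k, S k - c*(b:ℝ) ≤ S k - c*(a:ℝ) := by
    intro k; nlinarith
  -- change of variables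
  have key : ∀ s : ℝ, (∫ x in (a:ℝ)..(b:ℝ), f (s - c * x))
      = c⁻¹ * ∫ x in (s - c*(b:ℝ))..(s - c*(a:ℝ)), f x := by
    intro s
    have h := intervalIntegral.integral_comp_mul_add (a := (a:ℝ)) (b := (b:ℝ)) f
      (neg_ne_zero.mpr hc0.ne') s
    have h2 : (∫ x in (a:ℝ)..(b:ℝ), f (s - c * x)) = ∫ x in (a:ℝ)..(b:ℝ), f (-c * x + s) := by
      congr 1; ext x; ring_nf
    rw [h2, h]
    have e1 : -c * (a:ℝ) + s = s - c*(a:ℝ) := by ring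
    have e2 : -c * (b:ℝ) + s = s - c*(b:ℝ) := by ring
    rw [e1, e2, smul_eq_mul, intervalIntegral.integral_symm]
    field_simp
  -- rewrite the LHS integral
  have hLHS : (∫ x in (a:ℝ)..(b:ℝ), c⁻¹ * ∑ k ∈ Finset.Icc 1 n, f (S k - c * x))
      = (n:ℝ)⁻¹ * ∑ k ∈ Finset.Icc 1 n, J k := by
    rw [intervalIntegral.integral_const_mul,
      intervalIntegral.integral_finset_sum (f := fun k x => f (S k - c * x)) (fun k _ =>
        (Continuous.intervalIntegrable
          (hf.comp (continuous_const.sub (continuous_const.mul continuous_id))) _ _))]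
    simp_rw [key]
    rw [← Finset.mul_sum, ← mul_assoc, ← mul_inv, hcc]
  have hJ_nonneg : ∀ k, 0 ≤ J k := fun k =>
    intervalIntegral.integral_nonneg (hle k) (fun x _ => hnn x)
  have hJ_le_one : ∀ k, J k ≤ 1 := by
    intro k
    show (∫ x in (S k - c*(b:ℝ))..(S k - c*(a:ℝ)), f x) ≤ 1
    rw [intervalIntegral.integral_of_le (hle k)]
    calc (∫ x in Set.Ioc (S k - c*(b:ℝ)) (S k - c*(a:ℝ)), f x) ≤ ∫ x, f x :=
          setIntegral_le_integral hint (Filter.Eventually.of_forall hnn)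
      _ = 1 := h1
  set T : ℝ := ∫ x in Set.Ioi (c * (ε:ℝ)), f x with hT
  have hT0 : 0 ≤ T := setIntegral_nonneg measurableSet_Ioi (fun x _ => hnn x)
  have hTsymm : (∫ x in Set.Iic (-(c * (ε:ℝ))), f x) = T := by
    rw [hT, ← integral_comp_neg_Ioi]
    simp_rw [hsymm]
  -- upper bound terms for out-of-window indices
  have hJ_out : ∀ k, (c⁻¹ * S k ∉ Set.Icc ((a:ℝ) - (ε:ℝ)) ((b:ℝ) + (ε:ℝ))) → J k ≤ T := by
    intro k hk
    rw [Set.mem_Icc, not_and_or] at hk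
    show (∫ x in (S k - c*(b:ℝ))..(S k - c*(a:ℝ)), f x) ≤ T
    rw [intervalIntegral.integral_of_le (hle k)]
    have hkey : S k = c * (c⁻¹ * S k) := by
      rw [← mul_assoc, hcinv, one_mul]
    rcases hk with hk | hk
    · push_neg at hk
      have hSk : S k < c * ((a:ℝ) - ε) := by
        rw [hkey]; exact mul_lt_mul_of_pos_left hk hc0
      rw [← hTsymm]
      refine setIntegral_mono_set hint.integrableOn
        (Filter.Eventually.of_forall (fun x => hnn x))
        (Filter.Eventually.of_forall ?_)
      intro x hx
      obtain ⟨hx1, hx2⟩ := hx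
      show x ≤ -(c * (ε:ℝ))
      nlinarith
    · push_neg at hk
      have hSk : c * ((b:ℝ) + ε) < S k := by
        rw [hkey]; exact mul_lt_mul_of_pos_left hk hc0
      refine setIntegral_mono_set hint.integrableOn
        (Filter.Eventually.of_forall (fun x => hnn x))
        (Filter.Eventually.of_forall ?_)
      intro x hx
      obtain ⟨hx1, hx2⟩ := hx
      show c * (ε:ℝ) < x
      nlinarith
  -- lower bound terms for in-window indices
  set M : ℝ := ∫ x in (-(ε:ℝ) * c)..((ε:ℝ) * c), f x with hM
  have hεc : -(ε:ℝ) * c ≤ (ε:ℝ) * c := by nlinarith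
  have hM0 : 0 ≤ M := intervalIntegral.integral_nonneg hεc (fun x _ => hnn x)
  have hJ_in : ∀ k, (c⁻¹ * S k ∈ Set.Icc ((a:ℝ) + (ε:ℝ)) ((b:ℝ) - (ε:ℝ))) → M ≤ J k := by
    intro k hk
    rw [Set.mem_Icc] at hk
    have hkey : S k = c * (c⁻¹ * S k) := by
      rw [← mul_assoc, hcinv, one_mul]
    have h1' : c * ((a:ℝ) + ε) ≤ S k := by
      rw [hkey]; exact mul_le_mul_of_nonneg_left hk.1 hc0.le
    have h2' : S k ≤ c * ((b:ℝ) - ε) := by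
      rw [hkey]; exact mul_le_mul_of_nonneg_left hk.2 hc0.le
    show (∫ x in (-(ε:ℝ) * c)..((ε:ℝ) * c), f x) ≤ ∫ x in (S k - c*(b:ℝ))..(S k - c*(a:ℝ)), f x
    rw [intervalIntegral.integral_of_le hεc, intervalIntegral.integral_of_le (hle k)]
    refine setIntegral_mono_set hint.integrableOn
      (Filter.Eventually.of_forall (fun x => hnn x))
      (Filter.Eventually.of_forall ?_)
    intro x hx
    obtain ⟨hx1, hx2⟩ := hx
    exact ⟨by nlinarith, by nlinarith⟩
  have hcard : (Finset.Icc 1 n).card = n := by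
    rw [Nat.card_Icc]; omega
  constructor
  · -- upper bound
    rw [hLHS]
    have hsum : ∑ k ∈ Finset.Icc 1 n, J k
        ≤ (((Finset.Icc 1 n).filter
            (fun k => c⁻¹ * S k ∈ Set.Icc ((a:ℝ) - (ε:ℝ)) ((b:ℝ) + (ε:ℝ)))).card : ℝ)
          + (n:ℝ) * T := by
      rw [← Finset.sum_filter_add_sum_filter_not (Finset.Icc 1 n)
        (fun k => c⁻¹ * S k ∈ Set.Icc ((a:ℝ) - (ε:ℝ)) ((b:ℝ) + (ε:ℝ))) J]
      have hs1 : (∑ k ∈ (Finset.Icc 1 n).filter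
            (fun k => c⁻¹ * S k ∈ Set.Icc ((a:ℝ) - (ε:ℝ)) ((b:ℝ) + (ε:ℝ))), J k)
          ≤ (((Finset.Icc 1 n).filter
            (fun k => c⁻¹ * S k ∈ Set.Icc ((a:ℝ) - (ε:ℝ)) ((b:ℝ) + (ε:ℝ)))).card : ℝ) := by
        have := Finset.sum_le_card_nsmul ((Finset.Icc 1 n).filter
          (fun k => c⁻¹ * S k ∈ Set.Icc ((a:ℝ) - (ε:ℝ)) ((b:ℝ) + (ε:ℝ)))) J 1
          (fun k _ => hJ_le_one k)
        simpa using this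
      have hs2 : (∑ k ∈ (Finset.Icc 1 n).filter
            (fun k => ¬(c⁻¹ * S k ∈ Set.Icc ((a:ℝ) - (ε:ℝ)) ((b:ℝ) + (ε:ℝ)))), J k)
          ≤ (n:ℝ) * T := by
        have h1s := Finset.sum_le_card_nsmul ((Finset.Icc 1 n).filter
          (fun k => ¬(c⁻¹ * S k ∈ Set.Icc ((a:ℝ) - (ε:ℝ)) ((b:ℝ) + (ε:ℝ))))) J T
          (fun k hk => hJ_out k (Finset.mem_filter.mp hk).2)
        have h2s : ((Finset.Icc 1 n).filter
            (fun k => ¬(c⁻¹ * S k ∈ Set.Icc ((a:ℝ) - (ε:ℝ)) ((b:ℝ) + (ε:ℝ))))).card ≤ n := by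
          exact (Finset.card_filter_le _ _).trans_eq hcard
        rw [nsmul_eq_mul] at h1s
        exact h1s.trans (mul_le_mul_of_nonneg_right (by exact_mod_cast h2s) hT0)
      exact add_le_add hs1 hs2
    refine le_trans (mul_le_mul_of_nonneg_left hsum (by positivity : (0:ℝ) ≤ (n:ℝ)⁻¹))
      (le_of_eq ?_)
    field_simp
  · -- lower bound
    rw [ge_iff_le, hLHS]
    have hsum : ((((Finset.Icc 1 n).filter
          (fun k => c⁻¹ * S k ∈ Set.Icc ((a:ℝ) + (ε:ℝ)) ((b:ℝ) - (ε:ℝ)))).card : ℝ)) * M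
        ≤ ∑ k ∈ Finset.Icc 1 n, J k := by
      have h1s := Finset.card_nsmul_le_sum ((Finset.Icc 1 n).filter
        (fun k => c⁻¹ * S k ∈ Set.Icc ((a:ℝ) + (ε:ℝ)) ((b:ℝ) - (ε:ℝ)))) J M
        (fun k hk => hJ_in k (Finset.mem_filter.mp hk).2)
      rw [nsmul_eq_mul] at h1s
      refine h1s.trans (Finset.sum_le_sum_of_subset_of_nonneg (Finset.filter_subset _ _)
        (fun k _ _ => hJ_nonneg k))
    calc (((Finset.Icc 1 n).filter
          (fun k => c⁻¹ * S k ∈ Set.Icc ((a:ℝ) + (ε:ℝ)) ((b:ℝ) - (ε:ℝ)))).card : ℝ) / n * M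
        = (n:ℝ)⁻¹ * (((((Finset.Icc 1 n).filter
          (fun k => c⁻¹ * S k ∈ Set.Icc ((a:ℝ) + (ε:ℝ)) ((b:ℝ) - (ε:ℝ)))).card : ℝ)) * M) := by
          ring
      _ ≤ (n:ℝ)⁻¹ * ∑ k ∈ Finset.Icc 1 n, J k :=
          mul_le_mul_of_nonneg_left hsum (by positivity)
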